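/- arXiv:2408.10840 — 4 statements merged into one kernel-verified Lean document; each statement's English description precedes it below -/
import Mathlib

section
/- Let L be a generator on a finite poset S. The transition semigroup P_t = exp(tL) is stochastically monotone if and only if L satisfies Massey's condition. -/
open Finset

section CoreDefs

/-- The Hasse diagram of a poset, as a simple graph: edges are covering pairs. -/
def hasse (S : Type*) [PartialOrder S] : SimpleGraph S where
  Adj x y := x ⋖ y ∨ y ⋖ x
  symm := ⟨fun _ _ h => Or.symm h⟩
  loopless := ⟨fun x h => lt_irrefl x (h.elim CovBy.lt CovBy.lt)⟩

/-- A poset is acyclic if its Hasse diagram is a forest. -/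
def PosetAcyclic (S : Type*) [PartialOrder S] : Prop := (hasse S).IsAcyclic

/-- A poset is connected if its Hasse diagram is connected. -/
def PosetConnected (S : Type*) [PartialOrder S] : Prop := (hasse S).Connected

variable {S A : Type*}

/-- `P ⪯ Q` : stochastic domination, `P U ≤ Q U` for every up-set `U`. -/
def StochLE [PartialOrder S] [Fintype S] (P Q : S → ℝ) : Prop :=
  ∀ U : Finset S, IsUpperSet (U : Set S) → ∑ x ∈ U, P x ≤ ∑ x ∈ U, Q x

/-- A system of nonnegative measures on `S` with common total mass `p`. -/
def IsMeasureSystem [Fintype S] (P : A → S → ℝ) (p : ℝ) : Prop :=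
  (∀ α x, 0 ≤ P α x) ∧ ∀ α, ∑ x, P α x = p

/-- A system indexed by a poset is stochastically monotone if it is
compatible with the stochastic ordering. -/
def StochMonoSystem [PartialOrder A] [PartialOrder S] [Fintype S] (P : A → S → ℝ) : Prop :=
  ∀ α β : A, α ≤ β → StochLE (P α) (P β)

/-- A system is realizably monotone if it is the system of marginals of a
nonnegative weight supported on monotone maps from `A` to `S`. -/
def RealizablyMono [PartialOrder A] [PartialOrder S] [Fintype A] [Fintype S]
    [DecidableEq A] [DecidableEq S] (P : A → S → ℝ) : Prop :=
  ∃ μ : (A → S) → ℝ, (∀ h, 0 ≤ μ h) ∧ (∀ h, μ h ≠ 0 → Monotone h) ∧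
    ∀ (α : A) (x : S), ∑ h ∈ univ.filter (fun h : A → S => h α = x), μ h = P α x

/-- The unit point mass at `x`. -/
def pointMass [DecidableEq S] (x : S) : S → ℝ := fun y => if y = x then 1 else 0

end CoreDefs
section GenDefs

variable {S : Type*} [Fintype S] [DecidableEq S]

/-- A generator (Q-matrix) on a finite set. -/
def IsGenerator (L : Matrix S S ℝ) : Prop :=
  (∀ x y : S, x ≠ y → 0 ≤ L x y) ∧ ∀ x : S, ∑ y : S, L x y = 0

/-- The transition semigroup `P_t = exp (t L)`. -/
noncomputable def transP (L : Matrix S S ℝ) (t : ℝ) : Matrix S S ℝ :=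
  NormedSpace.exp (t • L)

/-- The transition semigroup is stochastically monotone. -/
def SemigroupStochMono [PartialOrder S] (L : Matrix S S ℝ) : Prop :=
  ∀ t : ℝ, 0 ≤ t → ∀ x y : S, x ≤ y → StochLE (transP L t x) (transP L t y)

/-- `L` admits a monotone representation: `L x y = ∑ γ h` over monotone
non-identity maps `h` with `h x = y`, for `x ≠ y`. -/
def MonotoneRep [PartialOrder S] (L : Matrix S S ℝ) : Prop :=
  ∃ γ : (S → S) → ℝ, (∀ h, 0 ≤ γ h) ∧ (∀ h, γ h ≠ 0 → Monotone h ∧ h ≠ id) ∧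
    ∀ x y : S, x ≠ y → L x y = ∑ h ∈ Finset.univ.filter (fun h : S → S => h x = y), γ h

end GenDefs

/-- Massey's condition for a generator `L`. -/
def Massey {S : Type*} [PartialOrder S] [Fintype S] [DecidableEq S] (L : Matrix S S ℝ) : Prop :=
  ∀ x y : S, x ≤ y →
    (∀ U : Finset S, IsUpperSet (U : Set S) → y ∉ U →
      ∑ z ∈ U, L x z ≤ ∑ z ∈ U, L y z) ∧
    (∀ U : Finset S, IsUpperSet (U : Set S) → x ∈ U →
      ∑ z ∈ Uᶜ, L y z ≤ ∑ z ∈ Uᶜ, L x z)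


section AuxProofs

lemma sum_mul_mono {S : Type*} [PartialOrder S] [Fintype S] [DecidableEq S]
    (μ ν : S → ℝ) (h : StochLE μ ν) (hm : ∑ x, μ x = ∑ x, ν x)
    (g : S → ℝ) (hg : Monotone g) :
    ∑ x, μ x * g x ≤ ∑ x, ν x * g x := by
  suffices H : ∀ n (g : S → ℝ), Monotone g → (image g univ).card ≤ n →
      ∑ x, μ x * g x ≤ ∑ x, ν x * g x from H _ g hg le_rfl
  intro n
  induction n with
  | zero =>
    intro g hg hc
    have : (univ : Finset S) = ∅ := by
      by_contra hne
      obtain ⟨x, hx⟩ := Finset.nonempty_iff_ne_empty.2 hne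
      have : g x ∈ image g univ := mem_image_of_mem g hx
      simp [Finset.card_eq_zero.mp (Nat.le_zero.mp hc)] at this
    simp [this]
  | succ n ih =>
    intro g hg hc
    rcases Finset.eq_empty_or_nonempty (univ : Finset S) with hS | hS
    · simp [hS]
    have hne : (image g univ).Nonempty := hS.image g
    by_cases h1 : (image g univ).card ≤ 1
    · -- g constant
      obtain ⟨c, hcst⟩ := Finset.card_le_one_iff_subset_singleton.mp h1
      have hgc : ∀ x : S, g x = c := by
        intro x
        have := hcst (mem_image_of_mem g (mem_univ x))
        simpa using this
      simp only [hgc, ← Finset.sum_mul]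
      rw [hm]
    · -- at least two values
      push_neg at h1
      set m : ℝ := (image g univ).min' hne with hmdef
      have hmmem : m ∈ image g univ := Finset.min'_mem _ _
      have hrest : ((image g univ).erase m).Nonempty := by
        rw [← Finset.card_pos, Finset.card_erase_of_mem hmmem]
        omega
      set m2 : ℝ := ((image g univ).erase m).min' hrest with hm2def
      have hm2mem : m2 ∈ (image g univ).erase m := Finset.min'_mem _ _
      have hmlt : m < m2 := by
        have h2 := (Finset.mem_erase.mp hm2mem)
        exact lt_of_le_of_ne (Finset.min'_le _ _ h2.2) (Ne.symm h2.1)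
      have hmin : ∀ x : S, m ≤ g x := fun x => Finset.min'_le _ _ (mem_image_of_mem g (mem_univ x))
      have hm2le : ∀ x : S, g x ≠ m → m2 ≤ g x := by
        intro x hx
        exact Finset.min'_le _ _ (Finset.mem_erase.mpr ⟨hx, mem_image_of_mem g (mem_univ x)⟩)
      set g' : S → ℝ := fun x => if g x = m then m2 else g x with hg'def
      have hg'mono : Monotone g' := by
        intro a b hab
        simp only [hg'def]
        by_cases ha : g a = m
        · by_cases hb : g b = m
          · simp [ha, hb]
          · simpa [ha, hb] using hm2le b hb
        · have hb : g b ≠ m := by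
            intro hb
            exact ha (le_antisymm (hb ▸ hg hab) (hmin a))
          simpa [ha, hb] using hg hab
      have hcard' : (image g' univ).card ≤ n := by
        have hsub : image g' univ ⊆ (image g univ).erase m := by
          intro v hv
          obtain ⟨x, -, rfl⟩ := Finset.mem_image.mp hv
          by_cases hx : g x = m
          · simpa [hg'def, hx] using hm2mem
          · simp only [hg'def, if_neg hx]
            exact Finset.mem_erase.mpr ⟨hx, mem_image_of_mem g (mem_univ x)⟩
        calc (image g' univ).card ≤ ((image g univ).erase m).card := Finset.card_le_card hsub
          _ = (image g univ).card - 1 := Finset.card_erase_of_mem hmmem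
          _ ≤ n := by omega
      have hIH := ih g' hg'mono hcard'
      -- the upper set Aᶜ
      set U : Finset S := univ.filter (fun x => ¬ g x = m) with hUdef
      have hUup : IsUpperSet (U : Set S) := by
        intro a b hab ha
        simp only [hUdef, Finset.coe_filter, Set.mem_setOf_eq, Finset.mem_univ, true_and] at ha ⊢
        intro hb
        exact ha (le_antisymm (hb ▸ hg hab) (hmin a))
      have hU := h U hUup
      -- key identity
      have key : ∀ (ρ : S → ℝ), ∑ x, ρ x * g x
          = ∑ x, ρ x * g' x - (m2 - m) * ((∑ x, ρ x) - ∑ x ∈ U, ρ x) := by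
        intro ρ
        have hcompl : ∑ x ∈ univ.filter (fun x => g x = m), ρ x + ∑ x ∈ U, ρ x = ∑ x, ρ x := by
          rw [hUdef]
          exact Finset.sum_filter_add_sum_filter_not univ (fun x => g x = m) ρ
        have : ∀ x : S, ρ x * g x = ρ x * g' x - (m2 - m) * (if g x = m then ρ x else 0) := by
          intro x
          by_cases hx : g x = m
          · simp [hg'def, hx]; ring
          · simp [hg'def, hx]
        rw [Finset.sum_congr rfl (fun x _ => this x), Finset.sum_sub_distrib,
          ← Finset.mul_sum, Finset.sum_ite, Finset.sum_const_zero, add_zero]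
        have : ∑ x ∈ univ.filter (fun x => g x = m), ρ x = (∑ x, ρ x) - ∑ x ∈ U, ρ x := by
          linarith
        rw [this]
      have e1 := key μ
      have e2 := key ν
      have hmul : (m2 - m) * (∑ x ∈ U, μ x) ≤ (m2 - m) * ∑ x ∈ U, ν x :=
        mul_le_mul_of_nonneg_left hU (by linarith)
      rw [e1, e2, hm]
      nlinarith [hIH]

section Kernels
variable {S : Type*} [PartialOrder S] [Fintype S] [DecidableEq S]

/-- Product of row-mass-1 stochastically monotone kernels is stochastically monotone. -/
lemma stochMono_mul (M N : Matrix S S ℝ)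
    (hMrow : ∀ x, ∑ z, M x z = (1 : ℝ))
    (hM : ∀ x y : S, x ≤ y → StochLE (M x) (M y))
    (hN : ∀ x y : S, x ≤ y → StochLE (N x) (N y)) :
    ∀ x y : S, x ≤ y → StochLE ((M * N) x) ((M * N) y) := by
  intro x y hxy U hU
  have hrw : ∀ w : S, ∑ z ∈ U, (M * N) w z = ∑ v, M w v * (∑ z ∈ U, N v z) := by
    intro w
    simp only [Matrix.mul_apply]
    rw [Finset.sum_comm]
    simp [Finset.mul_sum]
  rw [hrw x, hrw y]
  exact sum_mul_mono (M x) (M y) (hM x y hxy) (by rw [hMrow, hMrow])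
    (fun v => ∑ z ∈ U, N v z) (fun a b hab => hN a b hab U hU)

lemma row_sum_mul (M N : Matrix S S ℝ) (hM : ∀ x, ∑ z, M x z = (1 : ℝ))
    (hN : ∀ x, ∑ z, N x z = (1 : ℝ)) : ∀ x, ∑ z, (M * N) x z = (1 : ℝ) := by
  intro x
  simp only [Matrix.mul_apply]
  rw [Finset.sum_comm]
  simp only [← Finset.mul_sum, hN]
  simpa using hM x

lemma stochMono_pow (M : Matrix S S ℝ)
    (hMrow : ∀ x, ∑ z, M x z = (1 : ℝ))
    (hM : ∀ x y : S, x ≤ y → StochLE (M x) (M y)) (n : ℕ) :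
    (∀ x, ∑ z, (M ^ n) x z = (1 : ℝ)) ∧
      ∀ x y : S, x ≤ y → StochLE ((M ^ n) x) ((M ^ n) y) := by
  induction n with
  | zero =>
    constructor
    · intro x; simp [Matrix.one_apply]
    · intro x y hxy U hU
      by_cases hx : x ∈ U
      · have hy : y ∈ U := hU hxy hx
        simp [Matrix.one_apply, Finset.sum_ite_eq' U, hx, hy, pow_zero]
      · have hle : (0:ℝ) ≤ ∑ z ∈ U, (1 : Matrix S S ℝ) y z := by
          apply Finset.sum_nonneg
          intro z _; simp [Matrix.one_apply]
          split <;> norm_num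
        simpa [Matrix.one_apply, Finset.sum_ite_eq' U, hx] using hle
  | succ n ih =>
    rw [pow_succ]
    exact ⟨row_sum_mul _ _ ih.1 hMrow, stochMono_mul _ _ ih.1 ih.2 hM⟩

end Kernels



section MasseyToM
variable {S : Type*} [PartialOrder S] [Fintype S] [DecidableEq S]

/-- From Massey + generator: for every upper set `U` and `x ≤ y`,
`∑_U L x + λ·1_U(x) ≤ ∑_U L y + λ·1_U(y)` where `λ = 1 + ∑ |L z z|`. -/
lemma massey_M_mono (L : Matrix S S ℝ) (hL : IsGenerator L) (hM : Massey L)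
    {x y : S} (hxy : x ≤ y) {U : Finset S} (hU : IsUpperSet (U : Set S)) :
    ∑ z ∈ U, L x z + (1 + ∑ z, |L z z|) * (if x ∈ U then (1:ℝ) else 0) ≤
      ∑ z ∈ U, L y z + (1 + ∑ z, |L z z|) * (if y ∈ U then (1:ℝ) else 0) := by
  set lam : ℝ := 1 + ∑ z, |L z z| with hlam
  by_cases hx : x ∈ U
  · have hy : y ∈ U := hU hxy hx
    -- from Massey.2 and row sums
    have h2 := (hM x y hxy).2 U hU hx
    have hxs : ∑ z ∈ U, L x z + ∑ z ∈ Uᶜ, L x z = 0 := by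
      rw [Finset.sum_add_sum_compl]; exact hL.2 x
    have hys : ∑ z ∈ U, L y z + ∑ z ∈ Uᶜ, L y z = 0 := by
      rw [Finset.sum_add_sum_compl]; exact hL.2 y
    simp only [hx, hy, if_pos]
    linarith
  · by_cases hy : y ∈ U
    · -- cross case: x ∉ U, y ∈ U, x ≠ y
      have hxy' : x ≠ y := by rintro rfl; exact hx hy
      have h1 : ∑ z ∈ U, L x z ≤ -L x x := by
        have : ∑ z ∈ U, L x z ≤ ∑ z ∈ ({x}ᶜ : Finset S), L x z := by
          apply Finset.sum_le_sum_of_subset_of_nonneg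
          · intro z hz
            simp only [Finset.mem_compl, Finset.mem_singleton]
            rintro rfl; exact hx hz
          · intro z hz1 _
            simp only [Finset.mem_compl, Finset.mem_singleton] at hz1
            exact hL.1 x z (Ne.symm hz1)
        have hsx : ∑ z ∈ ({x}ᶜ : Finset S), L x z + ∑ z ∈ ({x} : Finset S), L x z
            = ∑ z, L x z := Finset.sum_compl_add_sum _ _
        rw [hL.2 x, Finset.sum_singleton] at hsx
        linarith
      have h2 : L y y ≤ ∑ z ∈ U, L y z := by
        have : ∑ z ∈ ({y} : Finset S), L y z ≤ ∑ z ∈ U, L y z := by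
          apply Finset.sum_le_sum_of_subset_of_nonneg
          · simpa using hy
          · intro z _ hz
            simp only [Finset.mem_singleton] at hz
            exact hL.1 y z (fun h => hz h.symm)
        simpa using this
      have hbound : -L x x - L y y ≤ lam := by
        have hsub : ({x, y} : Finset S) ⊆ univ := Finset.subset_univ _
        have : |L x x| + |L y y| ≤ ∑ z, |L z z| := by
          have := Finset.sum_le_sum_of_subset_of_nonneg hsub
            (fun z _ _ => abs_nonneg (L z z))
          rwa [Finset.sum_pair hxy'] at this
        have h3 : -L x x ≤ |L x x| := neg_le_abs _
        have h4 : -L y y ≤ |L y y| := neg_le_abs _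
        rw [hlam]; linarith
      simp only [hx, hy, if_pos, if_neg, if_true, if_false]
      linarith
    · -- both outside
      have h1 := (hM x y hxy).1 U hU hy
      simp only [hx, hy, if_neg, if_false]
      linarith

end MasseyToM

section Exp
variable {S : Type*} [Fintype S] [DecidableEq S]
open NormedSpace Nat

lemma exp_sum_entry_eq (A : Matrix S S ℝ) (x : S) (U : Finset S) :
    ∑ z ∈ U, exp A x z = ∑' (n : ℕ), ((n ! : ℝ)⁻¹) * ∑ z ∈ U, (A ^ n) x z := by
  letI : SeminormedRing (Matrix S S ℝ) := Matrix.linftyOpSemiNormedRing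
  letI : NormedRing (Matrix S S ℝ) := Matrix.linftyOpNormedRing
  letI : NormedAlgebra ℝ (Matrix S S ℝ) := Matrix.linftyOpNormedAlgebra
  let phi0 : Matrix S S ℝ →ₗ[ℝ] ℝ :=
    { toFun := fun B => ∑ z ∈ U, B x z
      map_add' := by intro B C; simp [Finset.sum_add_distrib]
      map_smul' := by intro c B; simp [Finset.mul_sum] }
  let phi : Matrix S S ℝ →L[ℝ] ℝ := LinearMap.toContinuousLinearMap phi0
  have hsum : Summable (fun n : ℕ => ((n ! : ℝ)⁻¹) • A ^ n) := expSeries_summable' A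
  have h1 : ∑ z ∈ U, exp A x z = phi (exp A) := rfl
  rw [h1, exp_eq_tsum ℝ]
  rw [phi.map_tsum hsum]
  congr 1
  ext n
  show phi0 (((n ! : ℝ)⁻¹) • A ^ n) = _
  simp [phi0, Finset.mul_sum]

lemma exp_summable_aux (A : Matrix S S ℝ) (x : S) (U : Finset S) :
    Summable (fun n : ℕ => ((n ! : ℝ)⁻¹) * ∑ z ∈ U, (A ^ n) x z) := by
  letI : SeminormedRing (Matrix S S ℝ) := Matrix.linftyOpSemiNormedRing
  letI : NormedRing (Matrix S S ℝ) := Matrix.linftyOpNormedRing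
  letI : NormedAlgebra ℝ (Matrix S S ℝ) := Matrix.linftyOpNormedAlgebra
  let phi0 : Matrix S S ℝ →ₗ[ℝ] ℝ :=
    { toFun := fun B => ∑ z ∈ U, B x z
      map_add' := by intro B C; simp [Finset.sum_add_distrib]
      map_smul' := by intro c B; simp [Finset.mul_sum] }
  let phi : Matrix S S ℝ →L[ℝ] ℝ := LinearMap.toContinuousLinearMap phi0
  have hsum : Summable (fun n : ℕ => ((n ! : ℝ)⁻¹) • A ^ n) := expSeries_summable' A
  have := hsum.map (phi : Matrix S S ℝ →L[ℝ] ℝ) phi.continuous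
  convert this using 2 with n
  show _ = phi0 (((n ! : ℝ)⁻¹) • A ^ n)
  simp [phi0, Finset.mul_sum]

end Exp

section Exp2
variable {S : Type*} [Fintype S] [DecidableEq S]
open NormedSpace Nat

lemma exp_smul_one (r : ℝ) :
    exp (r • (1 : Matrix S S ℝ)) = Real.exp r • (1 : Matrix S S ℝ) := by
  have h1 : r • (1 : Matrix S S ℝ) = Matrix.diagonal (fun _ => r) := by
    ext i j
    by_cases h : i = j <;> simp [Matrix.one_apply, Matrix.diagonal_apply, h]
  have h3 : Real.exp r • (1 : Matrix S S ℝ) = Matrix.diagonal (fun _ => Real.exp r) := by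
    ext i j
    by_cases h : i = j <;> simp [Matrix.one_apply, Matrix.diagonal_apply, h]
  rw [h1, h3, Matrix.exp_diagonal]
  have h4 : exp (fun _ : S => r) = fun _ : S => Real.exp r := by
    funext z
    rw [Pi.coe_exp, ← Real.exp_eq_exp_ℝ]
  rw [h4]

lemma exp_decomp (L : Matrix S S ℝ) (t lam : ℝ) (hlam : lam ≠ 0) :
    exp (t • L) = Real.exp (-(t * lam)) •
      exp ((t * lam) • (lam⁻¹ • L + 1)) := by
  set c : ℝ := t * lam with hc
  have hsplit : t • L = c • (lam⁻¹ • L + 1) + (-c) • (1 : Matrix S S ℝ) := by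
    rw [smul_add, smul_smul, hc, mul_assoc, mul_inv_cancel₀ hlam, mul_one, neg_smul]
    abel
  have hcomm : Commute (c • (lam⁻¹ • L + 1)) ((-c) • (1 : Matrix S S ℝ)) :=
    ((Commute.one_right _).smul_left c).smul_right (-c)
  rw [hsplit, Matrix.exp_add_of_commute _ _ hcomm, exp_smul_one, mul_smul_comm, mul_one]

lemma deriv_nonneg_at_zero {g : ℝ → ℝ} {d : ℝ} (hd : HasDerivAt g d 0) (h0 : g 0 = 0)
    (hge : ∀ t : ℝ, 0 ≤ t → 0 ≤ g t) : 0 ≤ d := by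
  have h := hasDerivAt_iff_tendsto_slope.mp hd
  have h2 : Filter.Tendsto (slope g 0) (nhdsWithin 0 (Set.Ioi 0)) (nhds d) :=
    h.mono_left (nhdsWithin_mono 0 (fun t ht => ne_of_gt ht))
  refine ge_of_tendsto h2 ?_
  filter_upwards [self_mem_nhdsWithin] with t ht
  have ht' : (0:ℝ) < t := ht
  rw [slope_def_field, h0, sub_zero, sub_zero]
  exact div_nonneg (hge t ht'.le) ht'.le

lemma hasDerivAt_exp_sum (L : Matrix S S ℝ) (x w : S) (U : Finset S) :
    HasDerivAt (fun t : ℝ => ∑ z ∈ U, exp (t • L) w z - ∑ z ∈ U, exp (t • L) x z)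
      (∑ z ∈ U, L w z - ∑ z ∈ U, L x z) 0 := by
  letI : SeminormedRing (Matrix S S ℝ) := Matrix.linftyOpSemiNormedRing
  letI : NormedRing (Matrix S S ℝ) := Matrix.linftyOpNormedRing
  letI : NormedAlgebra ℝ (Matrix S S ℝ) := Matrix.linftyOpNormedAlgebra
  have hexp : HasDerivAt (fun u : ℝ => exp (u • L)) (exp ((0:ℝ) • L) * L) 0 :=
    hasDerivAt_exp_smul_const L 0
  rw [zero_smul, exp_zero, one_mul] at hexp
  let phi0 : Matrix S S ℝ →ₗ[ℝ] ℝ :=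
    { toFun := fun B => ∑ z ∈ U, B w z - ∑ z ∈ U, B x z
      map_add' := fun B C => by simp [Finset.sum_add_distrib]; ring
      map_smul' := fun c B => by
        simp only [Matrix.smul_apply, smul_eq_mul, RingHom.id_apply]
        rw [mul_sub, Finset.mul_sum, Finset.mul_sum] }
  let phi : Matrix S S ℝ →L[ℝ] ℝ := LinearMap.toContinuousLinearMap phi0
  exact phi.hasFDerivAt.comp_hasDerivAt 0 hexp

end Exp2


end AuxProofs

open NormedSpace Nat

/-- The transition semigroup `P_t = exp (t L)` is
stochastically monotone if and only if `L` satisfies Massey's condition. -/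
theorem semigroup_stochMono_iff_massey
    (S : Type) [PartialOrder S] [Fintype S] [DecidableEq S]
    (L : Matrix S S ℝ) (hL : IsGenerator L) :
    SemigroupStochMono L ↔ Massey L := by
  constructor
  · intro hmono x y hxy
    have key : ∀ U : Finset S, IsUpperSet (U : Set S) → (x ∈ U ↔ y ∈ U) →
        ∑ z ∈ U, L x z ≤ ∑ z ∈ U, L y z := by
      intro U hU hiff
      have hd := hasDerivAt_exp_sum L x y U
      have h0 : ∑ z ∈ U, exp ((0:ℝ) • L) y z - ∑ z ∈ U, exp ((0:ℝ) • L) x z = 0 := by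
        rw [zero_smul, exp_zero]
        have hone : ∀ w : S, ∑ z ∈ U, (1 : Matrix S S ℝ) w z = if w ∈ U then (1:ℝ) else 0 := by
          intro w
          simp [Matrix.one_apply, Finset.sum_ite_eq]
        rw [hone x, hone y]
        by_cases hx : x ∈ U
        · simp [hx, hiff.mp hx]
        · have hy : y ∉ U := fun hy => hx (hiff.mpr hy)
          simp [hx, hy]
      have hge : ∀ t : ℝ, 0 ≤ t →
          0 ≤ ∑ z ∈ U, exp (t • L) y z - ∑ z ∈ U, exp (t • L) x z := by
        intro t htt
        have := hmono t htt x y hxy U hU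
        simp only [transP] at this
        linarith
      have := deriv_nonneg_at_zero hd h0 hge
      linarith
    constructor
    · intro U hU hyU
      exact key U hU ⟨fun hx => absurd (hU hxy hx) hyU, fun hy => absurd hy hyU⟩
    · intro U hU hxU
      have h1 := key U hU ⟨fun _ => hU hxy hxU, fun _ => hxU⟩
      have hx2 : ∑ z ∈ U, L x z + ∑ z ∈ Uᶜ, L x z = 0 := by
        rw [Finset.sum_add_sum_compl]; exact hL.2 x
      have hy2 : ∑ z ∈ U, L y z + ∑ z ∈ Uᶜ, L y z = 0 := by
        rw [Finset.sum_add_sum_compl]; exact hL.2 y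
      linarith
  · intro hms t ht x y hxy U hU
    set lam : ℝ := 1 + ∑ z, |L z z| with hlam
    have hlampos : 0 < lam := by
      have : 0 ≤ ∑ z, |L z z| := Finset.sum_nonneg fun z _ => abs_nonneg _
      rw [hlam]; linarith
    set M : Matrix S S ℝ := lam⁻¹ • L + 1 with hMdef
    have hMrow : ∀ w, ∑ z, M w z = (1:ℝ) := by
      intro w
      simp only [hMdef, Matrix.add_apply, Matrix.smul_apply, smul_eq_mul]
      rw [Finset.sum_add_distrib, ← Finset.mul_sum, hL.2 w, mul_zero, zero_add]
      simp [Matrix.one_apply, Finset.sum_ite_eq]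
    have hMU : ∀ w (V : Finset S),
        ∑ z ∈ V, M w z = lam⁻¹ * ∑ z ∈ V, L w z + (if w ∈ V then (1:ℝ) else 0) := by
      intro w V
      simp only [hMdef, Matrix.add_apply, Matrix.smul_apply, smul_eq_mul, Matrix.one_apply]
      rw [Finset.sum_add_distrib, ← Finset.mul_sum, Finset.sum_ite_eq]
    have hinv : lam⁻¹ * lam = 1 := inv_mul_cancel₀ hlampos.ne'
    have hMmono : ∀ a b : S, a ≤ b → StochLE (M a) (M b) := by
      intro a b hab V hV
      rw [hMU a V, hMU b V]
      have h2 := mul_le_mul_of_nonneg_left (massey_M_mono L hL hms hab hV)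
        (inv_nonneg.mpr hlampos.le)
      rw [mul_add, mul_add, ← mul_assoc, ← mul_assoc, hinv, one_mul, one_mul] at h2
      exact h2
    have hdec := exp_decomp L t lam hlampos.ne'
    show ∑ z ∈ U, transP L t x z ≤ ∑ z ∈ U, transP L t y z
    have htr : ∀ w, ∑ z ∈ U, transP L t w z
        = Real.exp (-(t*lam)) * ∑ z ∈ U, exp ((t*lam) • M) w z := by
      intro w
      simp only [transP, hdec, Matrix.smul_apply, smul_eq_mul, ← Finset.mul_sum, hMdef]
    rw [htr x, htr y]
    apply mul_le_mul_of_nonneg_left _ (Real.exp_nonneg _)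
    rw [exp_sum_entry_eq, exp_sum_entry_eq]
    refine Summable.tsum_le_tsum ?_ (exp_summable_aux _ x U) (exp_summable_aux _ y U)
    intro n
    have hsum' : ∀ w, ∑ z ∈ U, (((t*lam) • M)^n) w z = (t*lam)^n * ∑ z ∈ U, (M^n) w z := by
      intro w
      rw [smul_pow]
      simp [Matrix.smul_apply, Finset.mul_sum]
    rw [hsum' x, hsum' y]
    have hc : (0:ℝ) ≤ (t*lam)^n := pow_nonneg (mul_nonneg ht hlampos.le) n
    have hUle := (stochMono_pow M hMrow hMmono n).2 x y hxy U hU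
    have hfac : (0:ℝ) ≤ ((n ! : ℝ)⁻¹) := by positivity
    apply mul_le_mul_of_nonneg_left _ hfac
    exact mul_le_mul_of_nonneg_left hUle hc
end

section
/- Let L be a generator on a finite poset S with λ* = max_{x∈S}(−L(x,x)) > 0. The transition semigroup P_t = exp(tL) is stochastically monotone if and only if there exists λ ≥ λ* such that the stochastic matrix Q_λ(x,y) = I(x,y) + L(x,y)/λ is stochastically monotone, i.e., Q_λ(x,·) ⪯ Q_λ(y,·) whenever x ≤ y in S. -/
open Finset

lemma sum_mul_mono_le_aux {S : Type} [PartialOrder S] [Fintype S] [DecidableEq S]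
    (P P' : S → ℝ) (hmass : ∑ x, P x = ∑ x, P' x) (hle : StochLE P P') :
    ∀ (n : ℕ) (g : S → ℝ), Monotone g → (Finset.univ.image g).card ≤ n →
      ∑ x, P x * g x ≤ ∑ x, P' x * g x := by
  intro n
  induction n with
  | zero =>
    intro g hg hn
    have h : (Finset.univ : Finset S) = ∅ := by
      have := Finset.card_eq_zero.mp (Nat.le_zero.mp hn)
      rwa [Finset.image_eq_empty] at this
    simp [h]
  | succ n ih =>
    intro g hg hn
    by_cases hsmall : (Finset.univ.image g).card ≤ n
    · exact ih g hg hsmall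
    set V := Finset.univ.image g with hVdef
    have hV : V.Nonempty := Finset.card_pos.mp (by omega)
    set m := V.min' hV with hm
    have hmem : ∀ z : S, g z ∈ V := fun z => Finset.mem_image_of_mem g (Finset.mem_univ z)
    have hmin : ∀ z : S, m ≤ g z := fun z => Finset.min'_le V _ (hmem z)
    by_cases hone : V.card ≤ 1
    · -- constant function
      obtain ⟨c, hc⟩ := Finset.card_eq_one.mp (le_antisymm hone hV.card_pos)
      have hgc : ∀ z : S, g z = c := fun z => by
        have := hmem z; rw [hc, Finset.mem_singleton] at this; exact this
      have e1 : ∑ x, P x * g x = (∑ x, P x) * c := by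
        rw [Finset.sum_mul]; exact Finset.sum_congr rfl fun x _ => by rw [hgc x]
      have e2 : ∑ x, P' x * g x = (∑ x, P' x) * c := by
        rw [Finset.sum_mul]; exact Finset.sum_congr rfl fun x _ => by rw [hgc x]
      rw [e1, e2, hmass]
    -- at least two values
    have hV' : (V.erase m).Nonempty := by
      rw [← Finset.card_pos, Finset.card_erase_of_mem (V.min'_mem hV)]; omega
    set m₂ := (V.erase m).min' hV' with hm2
    have hm2mem := (V.erase m).min'_mem hV'
    have hmm2 : m < m₂ := by
      have h1 : m₂ ∈ V := Finset.mem_of_mem_erase hm2mem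
      have h2 : m₂ ≠ m := Finset.ne_of_mem_erase hm2mem
      exact lt_of_le_of_ne (Finset.min'_le V _ h1) (Ne.symm h2)
    have hle2 : ∀ v ∈ V, v ≠ m → m₂ ≤ v := fun v hv hvm =>
      Finset.min'_le _ _ (Finset.mem_erase.mpr ⟨hvm, hv⟩)
    set g' : S → ℝ := fun z => max (g z) m₂ with hg'def
    have hg' : Monotone g' := fun a b hab => max_le_max (hg hab) le_rfl
    have hkey : ∀ z : S, g' z = if g z = m then m₂ else g z := by
      intro z
      by_cases h : g z = m
      · simp [hg'def, h, max_eq_right hmm2.le]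
      · simp only [hg'def, if_neg h]
        exact max_eq_left (hle2 _ (hmem z) h)
    have hcard' : (Finset.univ.image g').card ≤ n := by
      have hsub : Finset.univ.image g' ⊆ V.erase m := by
        intro v hv
        obtain ⟨z, _, hz⟩ := Finset.mem_image.mp hv
        rw [hkey z] at hz
        by_cases h : g z = m
        · rw [if_pos h] at hz; exact hz ▸ hm2mem
        · rw [if_neg h] at hz
          exact hz ▸ Finset.mem_erase.mpr ⟨h, hmem z⟩
      have := Finset.card_le_card hsub
      rw [Finset.card_erase_of_mem (V.min'_mem hV)] at this
      omega
    have IH := ih g' hg' hcard'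
    set B := Finset.univ.filter (fun z : S => g z = m) with hB
    set A := Finset.univ.filter (fun z : S => ¬ g z = m) with hA
    have hupper : IsUpperSet (↑A : Set S) := by
      intro a b hab ha
      simp only [hA, Finset.coe_filter, Set.mem_setOf_eq, Finset.mem_univ, true_and] at ha ⊢
      intro hbm
      have : m < g a := lt_of_le_of_ne (hmin a) (Ne.symm ha)
      have := lt_of_lt_of_le this (hg hab)
      exact absurd hbm (by intro h; rw [h] at this; exact lt_irrefl m this)
    have hAle : ∑ x ∈ A, P x ≤ ∑ x ∈ A, P' x := hle A hupper
    have esplit : ∀ R : S → ℝ, ∑ x, R x * g' x = ∑ x, R x * g x + (∑ x ∈ B, R x) * (m₂ - m) := by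
      intro R
      have e1 : ∀ x : S, R x * g' x = R x * g x + (if g x = m then R x * (m₂ - m) else 0) := by
        intro x
        by_cases h : g x = m
        · rw [hkey x, if_pos h, if_pos h, h]; ring
        · rw [hkey x, if_neg h, if_neg h]; ring
      calc ∑ x, R x * g' x = ∑ x, (R x * g x + (if g x = m then R x * (m₂ - m) else 0)) :=
            Finset.sum_congr rfl fun x _ => e1 x
        _ = ∑ x, R x * g x + ∑ x, (if g x = m then R x * (m₂ - m) else 0) :=
            Finset.sum_add_distrib
        _ = ∑ x, R x * g x + ∑ x ∈ B, R x * (m₂ - m) := by rw [Finset.sum_filter]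
        _ = ∑ x, R x * g x + (∑ x ∈ B, R x) * (m₂ - m) := by rw [Finset.sum_mul]
    have eP := esplit P
    have eP' := esplit P'
    have emassP : ∑ x ∈ B, P x + ∑ x ∈ A, P x = ∑ x, P x :=
      Finset.sum_filter_add_sum_filter_not Finset.univ _ P
    have emassP' : ∑ x ∈ B, P' x + ∑ x ∈ A, P' x = ∑ x, P' x :=
      Finset.sum_filter_add_sum_filter_not Finset.univ _ P'
    nlinarith [mul_nonneg (sub_nonneg.mpr hmm2.le) (sub_nonneg.mpr hAle)]

lemma sum_mul_mono_le {S : Type} [PartialOrder S] [Fintype S] [DecidableEq S]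
    (P P' : S → ℝ) (hmass : ∑ x, P x = ∑ x, P' x) (hle : StochLE P P')
    (g : S → ℝ) (hg : Monotone g) :
    ∑ x, P x * g x ≤ ∑ x, P' x * g x :=
  sum_mul_mono_le_aux P P' hmass hle _ g hg le_rfl

lemma pow_stochMono {S : Type} [PartialOrder S] [Fintype S] [DecidableEq S]
    (Q : Matrix S S ℝ) (hrow : ∀ x, ∑ z, Q x z = 1)
    (hQ : ∀ x y : S, x ≤ y → StochLE (fun z => Q x z) (fun z => Q y z)) :
    ∀ (n : ℕ) (x y : S), x ≤ y → StochLE (fun z => (Q ^ n) x z) (fun z => (Q ^ n) y z) := by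
  intro n
  induction n with
  | zero =>
    intro x y hxy U hU
    simp only [pow_zero, Matrix.one_apply]
    rw [Finset.sum_ite_eq U x (fun _ => (1:ℝ)), Finset.sum_ite_eq U y (fun _ => (1:ℝ))]
    by_cases hx : x ∈ U
    · have hy : y ∈ U := hU hxy hx
      simp [hx, hy]
    · split_ifs <;> norm_num
  | succ n ih =>
    intro x y hxy U hU
    have key : ∀ w : S, ∑ z ∈ U, (Q ^ (n+1)) w z = ∑ v, Q w v * (∑ z ∈ U, (Q ^ n) v z) := by
      intro w
      rw [pow_succ']
      simp only [Matrix.mul_apply]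
      rw [Finset.sum_comm]
      simp_rw [Finset.mul_sum]
    rw [key x, key y]
    exact sum_mul_mono_le (fun v => Q x v) (fun v => Q y v)
      (by rw [hrow, hrow]) (hQ x y hxy) _ (fun a b hab => ih a b hab U hU)

lemma hasSum_exp_entrySum {S : Type} [Fintype S] [DecidableEq S]
    (M : Matrix S S ℝ) (c : ℝ) (x : S) (U : Finset S) :
    HasSum (fun n : ℕ => (c ^ n / n.factorial) * ∑ z ∈ U, (M ^ n) x z)
      (∑ z ∈ U, (NormedSpace.exp (c • M)) x z) := by
  letI : SeminormedRing (Matrix S S ℝ) := Matrix.linftyOpSemiNormedRing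
  letI : NormedRing (Matrix S S ℝ) := Matrix.linftyOpNormedRing
  letI : NormedAlgebra ℝ (Matrix S S ℝ) := Matrix.linftyOpNormedAlgebra
  have h1 : HasSum (fun n : ℕ => ((n.factorial : ℝ))⁻¹ • (c • M) ^ n)
      (NormedSpace.exp (c • M)) := by
    rw [NormedSpace.exp_eq_tsum (𝕂 := ℝ)]
    exact (NormedSpace.expSeries_summable' (𝕂 := ℝ) (c • M)).hasSum
  have h2 : (fun n : ℕ => ((n.factorial : ℝ))⁻¹ • (c • M) ^ n)
      = fun n : ℕ => (c ^ n / n.factorial) • M ^ n := by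
    funext n
    rw [smul_pow, smul_smul, div_eq_mul_inv, mul_comm]
  rw [h2] at h1
  let eL : Matrix S S ℝ →ₗ[ℝ] ℝ :=
    { toFun := fun A => ∑ z ∈ U, A x z
      map_add' := fun A B => by simp [Matrix.add_apply, Finset.sum_add_distrib]
      map_smul' := fun r A => by simp [Matrix.smul_apply, Finset.mul_sum] }
  let e : Matrix S S ℝ →L[ℝ] ℝ := LinearMap.toContinuousLinearMap eL
  have h3 := e.hasSum h1
  have h4 : ∀ n : ℕ, e ((c ^ n / n.factorial) • M ^ n)
      = (c ^ n / n.factorial) * ∑ z ∈ U, (M ^ n) x z := by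
    intro n
    rw [map_smul, smul_eq_mul]
    congr 1
  have h5 : e (NormedSpace.exp (c • M)) = ∑ z ∈ U, (NormedSpace.exp (c • M)) x z := rfl
  rw [h5] at h3
  exact (funext h4 : _) ▸ h3

lemma hasDerivAt_exp_entrySum {S : Type} [Fintype S] [DecidableEq S]
    (L : Matrix S S ℝ) (x : S) (U : Finset S) :
    HasDerivAt (fun t : ℝ => ∑ z ∈ U, (NormedSpace.exp (t • L)) x z) (∑ z ∈ U, L x z) 0 := by
  letI : SeminormedRing (Matrix S S ℝ) := Matrix.linftyOpSemiNormedRing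
  letI : NormedRing (Matrix S S ℝ) := Matrix.linftyOpNormedRing
  letI : NormedAlgebra ℝ (Matrix S S ℝ) := Matrix.linftyOpNormedAlgebra
  have h := hasDerivAt_exp_smul_const (𝕂 := ℝ) L (0 : ℝ)
  rw [zero_smul, NormedSpace.exp_zero, one_mul] at h
  let eL : Matrix S S ℝ →ₗ[ℝ] ℝ :=
    { toFun := fun A => ∑ z ∈ U, A x z
      map_add' := fun A B => by simp [Matrix.add_apply, Finset.sum_add_distrib]
      map_smul' := fun r A => by simp [Matrix.smul_apply, Finset.mul_sum] }
  let e : Matrix S S ℝ →L[ℝ] ℝ := LinearMap.toContinuousLinearMap eL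
  have h2 := e.hasFDerivAt.comp_hasDerivAt (0 : ℝ) h
  exact h2

lemma deriv_nonneg_of_nonneg_right {f : ℝ → ℝ} {d : ℝ}
    (hd : HasDerivAt f d 0) (h0 : f 0 = 0) (h : ∀ t : ℝ, 0 ≤ t → 0 ≤ f t) : 0 ≤ d := by
  have hd' : HasDerivWithinAt f d (Set.Ioi 0) 0 := hd.hasDerivWithinAt
  rw [hasDerivWithinAt_iff_tendsto_slope] at hd'
  have hset : Set.Ioi (0:ℝ) \ {0} = Set.Ioi 0 := by
    rw [Set.diff_singleton_eq_self (by simp)]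
  rw [hset] at hd'
  refine ge_of_tendsto hd' ?_
  filter_upwards [self_mem_nhdsWithin] with t ht
  have ht' : (0:ℝ) < t := ht
  rw [slope_def_field]
  simp only [h0, sub_zero]
  exact div_nonneg (h t ht'.le) ht'.le

/-- `P_t = exp (t L)` is stochastically monotone iff the
stochastic matrix `Q_λ = I + L/λ` is stochastically monotone for some
`λ ≥ λ* = max_x (-L x x) > 0`. -/
theorem semigroup_stochMono_iff_uniformized_stochMono
    (S : Type) [PartialOrder S] [Fintype S] [DecidableEq S] [Nonempty S]
    (L : Matrix S S ℝ) (hL : IsGenerator L)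
    (lamStar : ℝ) (hstar : lamStar = Finset.univ.sup' Finset.univ_nonempty (fun x : S => - L x x))
    (hpos : 0 < lamStar) :
    SemigroupStochMono L ↔
      ∃ lam : ℝ, lamStar ≤ lam ∧
        ∀ x y : S, x ≤ y →
          StochLE (fun z => (if x = z then (1 : ℝ) else 0) + L x z / lam)
                  (fun z => (if y = z then (1 : ℝ) else 0) + L y z / lam) := by
  have hLbound : ∀ a : S, -L a a ≤ lamStar := fun a =>
    hstar ▸ Finset.le_sup' (fun x : S => - L x x) (Finset.mem_univ a)
  constructor
  · intro hsm
    refine ⟨2 * lamStar, by linarith, ?_⟩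
    intro x y hxy U hU
    have hlam : (0:ℝ) < 2 * lamStar := by linarith
    have hind : ∀ a : S, ∑ z ∈ U, (if a = z then (1:ℝ) else 0) = if a ∈ U then 1 else 0 :=
      fun a => Finset.sum_ite_eq U a fun _ => (1:ℝ)
    rw [Finset.sum_add_distrib, Finset.sum_add_distrib, hind x, hind y,
      ← Finset.sum_div, ← Finset.sum_div]
    -- derivative comparison, valid when the indicators agree
    have hLU : (x ∈ U ↔ y ∈ U) → ∑ z ∈ U, L x z ≤ ∑ z ∈ U, L y z := by
      intro hiff
      have hdx := hasDerivAt_exp_entrySum L x U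
      have hdy := hasDerivAt_exp_entrySum L y U
      have hd := hdy.sub hdx
      have h0 : (fun t : ℝ => (∑ z ∈ U, (NormedSpace.exp (t • L)) y z)
          - ∑ z ∈ U, (NormedSpace.exp (t • L)) x z) 0 = 0 := by
        simp only [zero_smul, NormedSpace.exp_zero, Matrix.one_apply]
        rw [Finset.sum_ite_eq U x (fun _ => (1:ℝ)), Finset.sum_ite_eq U y (fun _ => (1:ℝ))]
        by_cases hx : x ∈ U
        · simp [hx, hiff.mp hx]
        · have hy : y ∉ U := fun h => hx (hiff.mpr h)
          simp [hx, hy]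
      have hnn : ∀ t : ℝ, 0 ≤ t → 0 ≤ (fun t : ℝ => (∑ z ∈ U, (NormedSpace.exp (t • L)) y z)
          - ∑ z ∈ U, (NormedSpace.exp (t • L)) x z) t := by
        intro t htt
        have := hsm t htt x y hxy U hU
        simp only [transP] at this
        simpa using sub_nonneg.mpr this
      have := deriv_nonneg_of_nonneg_right hd h0 hnn
      linarith
    by_cases hx : x ∈ U
    · have hy : y ∈ U := hU hxy hx
      rw [if_pos hx, if_pos hy]
      have := (div_le_div_iff_of_pos_right hlam).mpr (hLU ⟨fun _ => hy, fun _ => hx⟩)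
      linarith
    · by_cases hy : y ∈ U
      · rw [if_neg hx, if_pos hy]
        have ha : ∑ z ∈ U, L x z ≤ lamStar := by
          have hsub : U ⊆ Finset.univ.erase x := fun z hz =>
            Finset.mem_erase.mpr ⟨fun h => hx (h ▸ hz), Finset.mem_univ z⟩
          have h1 : ∑ z ∈ U, L x z ≤ ∑ z ∈ Finset.univ.erase x, L x z := by
            refine Finset.sum_le_sum_of_subset_of_nonneg hsub ?_
            intro z hz hzU
            exact hL.1 x z (fun h => (Finset.mem_erase.mp hz).1 h.symm)
          have h2 : ∑ z ∈ Finset.univ.erase x, L x z = - L x x := by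
            rw [Finset.sum_erase_eq_sub (Finset.mem_univ x), hL.2 x]; ring
          linarith [hLbound x]
        have hb : -lamStar ≤ ∑ z ∈ U, L y z := by
          have h1 : L y y + ∑ z ∈ U.erase y, L y z = ∑ z ∈ U, L y z :=
            Finset.add_sum_erase U (fun z => L y z) hy
          have h2 : 0 ≤ ∑ z ∈ U.erase y, L y z :=
            Finset.sum_nonneg fun z hz => hL.1 y z (fun h => (Finset.mem_erase.mp hz).1 h.symm)
          linarith [hLbound y]
        have hkey : ∑ z ∈ U, L x z ≤ 2 * lamStar + ∑ z ∈ U, L y z := by linarith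
        have hdiv := (div_le_div_iff_of_pos_right hlam).mpr hkey
        rw [add_div, div_self (ne_of_gt hlam)] at hdiv
        linarith
      · rw [if_neg hx, if_neg hy]
        have := (div_le_div_iff_of_pos_right hlam).mpr
          (hLU ⟨fun h => absurd h hx, fun h => absurd h hy⟩)
        linarith
  · rintro ⟨lam, hlamge, hQmono⟩
    have hlam : (0:ℝ) < lam := lt_of_lt_of_le hpos hlamge
    set Q : Matrix S S ℝ :=
      Matrix.of (fun a z => (if a = z then (1:ℝ) else 0) + L a z / lam) with hQdef
    have hrow : ∀ a, ∑ z, Q a z = 1 := by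
      intro a
      simp only [hQdef, Matrix.of_apply]
      rw [Finset.sum_add_distrib, Finset.sum_ite_eq Finset.univ a (fun _ => (1:ℝ)),
        ← Finset.sum_div, hL.2 a]
      simp
    have hQm : ∀ x y : S, x ≤ y → StochLE (fun z => Q x z) (fun z => Q y z) :=
      fun x y h => hQmono x y h
    have hpow := pow_stochMono Q hrow hQm
    intro t ht x y hxy U hU
    set c := t * lam with hc
    have hcnn : 0 ≤ c := mul_nonneg ht hlam.le
    have hsplitL : t • L = ((-c) • (1 : Matrix S S ℝ)) + c • Q := by
      ext a b
      simp only [hQdef, Matrix.add_apply, Matrix.smul_apply, Matrix.one_apply,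
        Matrix.of_apply, smul_eq_mul, hc]
      split_ifs with h <;> field_simp <;> ring
    have hcomm : Commute ((-c) • (1 : Matrix S S ℝ)) (c • Q) :=
      (Commute.one_left (c • Q)).smul_left (-c)
    have hexpdiag : NormedSpace.exp ((-c) • (1 : Matrix S S ℝ))
        = Real.exp (-c) • (1 : Matrix S S ℝ) := by
      rw [Matrix.smul_one_eq_diagonal, Matrix.exp_diagonal, Matrix.smul_one_eq_diagonal]
      have hfun : (NormedSpace.exp (fun _ : S => -c)) = fun _ : S => Real.exp (-c) := by
        funext i
        rw [Pi.coe_exp, Real.exp_eq_exp_ℝ]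
      rw [hfun]
    have hexp : transP L t = Real.exp (-c) • NormedSpace.exp (c • Q) := by
      rw [transP, hsplitL, Matrix.exp_add_of_commute _ _ hcomm, hexpdiag,
        smul_mul_assoc, one_mul]
    have hsum : ∀ a : S, ∑ z ∈ U, transP L t a z
        = Real.exp (-c) * ∑ z ∈ U, (NormedSpace.exp (c • Q)) a z := by
      intro a
      rw [hexp, Finset.mul_sum]
      exact Finset.sum_congr rfl fun z _ => by rw [Matrix.smul_apply, smul_eq_mul]
    show ∑ z ∈ U, transP L t x z ≤ ∑ z ∈ U, transP L t y z
    rw [hsum x, hsum y]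
    refine mul_le_mul_of_nonneg_left ?_ (Real.exp_nonneg _)
    refine hasSum_le ?_ (hasSum_exp_entrySum Q c x U) (hasSum_exp_entrySum Q c y U)
    intro n
    refine mul_le_mul_of_nonneg_left ?_ (div_nonneg (pow_nonneg hcnn n) (Nat.cast_nonneg _))
    exact hpow n x y hxy U hU
end

section
/- Let L be a generator on a finite poset S with λ* = max_{x∈S}(−L(x,x)) > 0. Then L admits a monotone representation if and only if there exists λ ≥ λ* such that the system (Q_λ(x,·))_{x∈S} of probability measures on S, where Q_λ(x,y) = I(x,y) + L(x,y)/λ, is realizably monotone. -/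
open Finset

/-- `L` admits a monotone representation iff the system
`(Q_λ (x, ·))_{x ∈ S}`, `Q_λ = I + L/λ`, is realizably monotone for some
`λ ≥ λ* = max_x (-L x x) > 0`. -/
theorem monotoneRep_iff_uniformized_realizablyMono
    (S : Type) [PartialOrder S] [Fintype S] [DecidableEq S] [Nonempty S]
    (L : Matrix S S ℝ)  (hL : IsGenerator L)
    (lamStar : ℝ) (hstar : lamStar = Finset.univ.sup' Finset.univ_nonempty (fun x : S => - L x x))
    (hpos : 0 < lamStar) :
    MonotoneRep L ↔
      ∃ lam : ℝ, lamStar ≤ lam ∧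
        RealizablyMono (fun x z => (if x = z then (1 : ℝ) else 0) + L x z / lam) := by
  obtain ⟨hLnn, hLrow⟩ := hL
  constructor
  · rintro ⟨γ, hγ0, hγm, hγrep⟩
    have hγid : γ id = 0 := by
      by_contra h; exact (hγm id h).2 rfl
    set G := ∑ h : S → S, γ h with hG
    refine ⟨max lamStar G, le_max_left _ _, ?_⟩
    set lam := max lamStar G with hlam
    have hlampos : 0 < lam := lt_of_lt_of_le hpos (le_max_left _ _)
    have hGle : G ≤ lam := le_max_right _ _
    refine ⟨fun h => if h = id then 1 - G / lam else γ h / lam, ?_, ?_, ?_⟩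
    · intro h
      by_cases hid : h = id
      · simp only [hid, if_true]
        have : G / lam ≤ 1 := (div_le_one hlampos).2 hGle
        linarith
      · simp only [hid, if_false]
        exact div_nonneg (hγ0 h) hlampos.le
    · intro h hne
      by_cases hid : h = id
      · subst hid; exact monotone_id
      · simp only [hid, if_false] at hne
        have hg : γ h ≠ 0 := fun h0 => hne (by rw [h0]; simp)
        exact (hγm h hg).1
    · intro x z
      have hsplit : ∀ h : S → S,
          (if h = id then 1 - G / lam else γ h / lam)
            = γ h / lam + (if h = id then 1 - G / lam else 0) := by
        intro h
        by_cases hid : h = id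
        · subst hid; simp [hγid]
        · simp [hid]
      simp only [hsplit]
      rw [Finset.sum_add_distrib]
      have h2 : (∑ h ∈ Finset.univ.filter (fun h : S → S => h x = z),
          (if h = id then 1 - G / lam else 0))
            = if x = z then 1 - G / lam else 0 := by
        rw [Finset.sum_ite_eq' (Finset.univ.filter (fun h : S → S => h x = z)) id
          (fun _ => 1 - G / lam)]
        simp only [Finset.mem_filter, Finset.mem_univ, true_and, id_eq]
      rw [h2, ← Finset.sum_div]
      by_cases hxz : x = z
      · subst hxz
        have hfib : ∑ z : S, ∑ h ∈ Finset.univ.filter (fun h : S → S => h x = z), γ h = G := by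
          exact Finset.sum_fiberwise Finset.univ (fun h : S → S => h x) γ
        have hrow := hLrow x
        rw [← Finset.add_sum_erase Finset.univ (fun z => L x z) (Finset.mem_univ x)] at hrow
        rw [← Finset.add_sum_erase Finset.univ
          (fun z => ∑ h ∈ Finset.univ.filter (fun h : S → S => h x = z), γ h)
          (Finset.mem_univ x)] at hfib
        have hcongr : ∑ z ∈ Finset.univ.erase x,
            (∑ h ∈ Finset.univ.filter (fun h : S → S => h x = z), γ h)
            = ∑ z ∈ Finset.univ.erase x, L x z := by
          refine Finset.sum_congr rfl fun z hz => ?_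
          rw [← hγrep x z (Ne.symm (Finset.mem_erase.1 hz).1)]
        have hkey : ∑ h ∈ Finset.univ.filter (fun h : S → S => h x = x), γ h = G + L x x := by
          rw [← hfib, hcongr]; linarith
        rw [hkey]
        simp only [eq_self_iff_true, if_true]
        field_simp
        ring
      · rw [← hγrep x z hxz]
        simp [hxz]
  · rintro ⟨lam, hlam, μ, hμ0, hμm, hμmarg⟩
    have hlampos : 0 < lam := lt_of_lt_of_le hpos hlam
    refine ⟨fun h => if h = id then 0 else lam * μ h, ?_, ?_, ?_⟩
    · intro h
      by_cases hid : h = id <;> simp [hid]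
      exact mul_nonneg hlampos.le (hμ0 h)
    · intro h hne
      by_cases hid : h = id
      · simp [hid] at hne
      · refine ⟨?_, hid⟩
        simp only [hid, if_false] at hne
        have : μ h ≠ 0 := fun h0 => hne (by rw [h0]; ring)
        exact hμm h this
    · intro x y hxy
      have hcongr : ∑ h ∈ Finset.univ.filter (fun h : S → S => h x = y),
          (if h = id then 0 else lam * μ h)
          = ∑ h ∈ Finset.univ.filter (fun h : S → S => h x = y), lam * μ h := by
        refine Finset.sum_congr rfl fun h hh => ?_
        have hhx : h x = y := (Finset.mem_filter.1 hh).2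
        have : h ≠ id := by
          rintro rfl; exact hxy hhx
        simp [this]
      rw [hcongr, ← Finset.mul_sum, hμmarg x y]
      simp only [if_neg hxy]
      field_simp
      ring
end

section
/- Let S be a finite connected poset. The following are equivalent: (A) for every generator L on S, if the transition semigroup P_t = exp(tL) is stochastically monotone then L admits a monotone representation; (B) every stochastically weakly monotone system (P_x)_{x∈S} of probability measures on S indexed by S itself is realizably weakly monotone. -/
open Finset

section AuxMono

variable {S : Type} [PartialOrder S] [Fintype S] [DecidableEq S]

/-- A matrix is stochastically monotone if its rows are ordered stochastically. -/
def SMmat (M : Matrix S S ℝ) : Prop := ∀ x y : S, x ≤ y → StochLE (M x) (M y)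

lemma indicator_mem_sum (T : Finset S) (w : S → ℝ) :
    ∑ z, w z * (if z ∈ T then (1:ℝ) else 0) = ∑ z ∈ T, w z := by
  simp only [mul_ite, mul_one, mul_zero]
  rw [Finset.sum_ite_mem, Finset.univ_inter]

lemma smmat_apply_mono_aux (n : ℕ) :
    ∀ (M : Matrix S S ℝ), (∀ x, ∑ z, M x z = 1) → SMmat M →
    ∀ f : S → ℝ, (Finset.univ.image f).card ≤ n → Monotone f →
    ∀ x y : S, x ≤ y → ∑ z, M x z * f z ≤ ∑ z, M y z * f z := by
  induction n with
  | zero =>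
    intro M hrow hM f hcard hf x y hxy
    have : (Finset.univ.image f) = ∅ := Finset.card_eq_zero.mp (Nat.le_zero.mp hcard)
    have huniv : (Finset.univ : Finset S) = ∅ := Finset.image_eq_empty.mp this
    simp [huniv]
  | succ n ih =>
    intro M hrow hM f hcard hf x y hxy
    by_cases hle : (Finset.univ.image f).card ≤ n
    · exact ih M hrow hM f hle hf x y hxy
    -- card = n+1, and n ≥ 0
    by_cases hone : (Finset.univ.image f).card ≤ 1
    · -- f is constant
      rcases isEmpty_or_nonempty S with hS | hS
      · simp
      · have hne : (Finset.univ.image f).Nonempty := ⟨f hS.some, Finset.mem_image_of_mem f (Finset.mem_univ _)⟩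
        obtain ⟨c, hc⟩ := Finset.card_le_one_iff_subset_singleton.mp hone
        have hconst : ∀ z : S, f z = c := by
          intro z
          have := hc (Finset.mem_image_of_mem f (Finset.mem_univ z))
          simpa using this
        simp only [hconst]
        rw [← Finset.sum_mul, ← Finset.sum_mul, hrow, hrow]
    -- now at least two values
    push_neg at hone hle
    have hSne : Nonempty S := by
      by_contra h
      rw [not_nonempty_iff] at h
      have : (Finset.univ : Finset S) = ∅ := Finset.univ_eq_empty
      simp [this] at hone
    have hine : (Finset.univ.image f).Nonempty := by
      rcases hSne with ⟨s⟩
      exact ⟨f s, Finset.mem_image_of_mem f (Finset.mem_univ _)⟩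
    set m : ℝ := (Finset.univ.image f).min' hine with hm
    have hmle : ∀ z : S, m ≤ f z := fun z =>
      Finset.min'_le _ _ (Finset.mem_image_of_mem f (Finset.mem_univ z))
    set U : Finset S := Finset.univ.filter (fun z => m < f z) with hU
    have hUup : IsUpperSet (U : Set S) := by
      intro a b hab ha
      simp only [hU, Finset.coe_filter, Set.mem_setOf_eq, Finset.mem_univ, true_and] at ha ⊢
      exact lt_of_lt_of_le ha (hf hab)
    have hUne : U.Nonempty := by
      -- there is a value in the image different from m
      obtain ⟨v, hv, hvm⟩ := Finset.exists_mem_ne hone m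
      obtain ⟨z, _, hz⟩ := Finset.mem_image.mp hv
      refine ⟨z, ?_⟩
      simp only [hU, Finset.mem_filter, Finset.mem_univ, true_and]
      exact lt_of_le_of_ne (hmle z) (by rw [hz]; exact Ne.symm hvm)
    have hUimne : (U.image f).Nonempty := hUne.image f
    set m' : ℝ := (U.image f).min' hUimne with hm'
    have hmm' : m < m' := by
      obtain ⟨z, hzU, hz⟩ := Finset.mem_image.mp (Finset.min'_mem _ hUimne)
      rw [hm', ← hz]
      simpa [hU] using (Finset.mem_filter.mp hzU).2
    have hm'le : ∀ z : S, m < f z → m' ≤ f z := by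
      intro z hz
      exact Finset.min'_le _ _ (Finset.mem_image_of_mem f (by simp [hU, hz]))
    set δ : ℝ := m' - m with hδ
    have hδpos : 0 < δ := sub_pos.mpr hmm'
    set g : S → ℝ := fun z => if m < f z then f z - δ else m with hg
    have hfg : ∀ z : S, f z = g z + δ * (if z ∈ U then 1 else 0) := by
      intro z
      by_cases h : m < f z
      · simp only [hg, if_pos h, hU, Finset.mem_filter, Finset.mem_univ, true_and]
        ring
      · have : f z = m := le_antisymm (not_lt.mp h) (hmle z)
        simp only [hg, if_neg h, hU, Finset.mem_filter, Finset.mem_univ, true_and]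
        simp [this]
    have hgmono : Monotone g := by
      intro a b hab
      by_cases ha : m < f a
      · have hb : m < f b := lt_of_lt_of_le ha (hf hab)
        simp only [hg, if_pos ha, if_pos hb]
        exact sub_le_sub_right (hf hab) δ
      · simp only [hg, if_neg ha]
        by_cases hb : m < f b
        · rw [if_pos hb]
          have := hm'le b hb
          simp only [hδ]; linarith
        · rw [if_neg hb]
    have hgcard : (Finset.univ.image g).card ≤ n := by
      have hsub : Finset.univ.image g ⊆
          insert m (((Finset.univ.image f).filter (fun v => m' < v)).image (fun v => v - δ)) := by
        intro v hv
        obtain ⟨z, _, hz⟩ := Finset.mem_image.mp hv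
        by_cases h : m < f z
        · have h1 : m' ≤ f z := hm'le z h
          rcases eq_or_lt_of_le h1 with heq | hlt
          · have : v = m := by rw [← hz]; simp only [hg, if_pos h]; rw [← heq]; simp [hδ]
            simp [this]
          · refine Finset.mem_insert_of_mem (Finset.mem_image.mpr ⟨f z, ?_, ?_⟩)
            · exact Finset.mem_filter.mpr ⟨Finset.mem_image_of_mem f (Finset.mem_univ z), hlt⟩
            · rw [← hz]; simp [hg, if_pos h]
        · have : v = m := by rw [← hz]; simp [hg, if_neg h]
          simp [this]
      have hm'mem : m' ∈ Finset.univ.image f := by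
        obtain ⟨z, hzU, hz⟩ := Finset.mem_image.mp (Finset.min'_mem _ hUimne)
        rw [hm', ← hz]
        exact Finset.mem_image_of_mem f (Finset.mem_univ z)
      have hmmem : m ∈ Finset.univ.image f := Finset.min'_mem _ hine
      have hfilt : ((Finset.univ.image f).filter (fun v => m' < v)) ⊆
          ((Finset.univ.image f).erase m).erase m' := by
        intro v hv
        obtain ⟨hv1, hv2⟩ := Finset.mem_filter.mp hv
        refine Finset.mem_erase.mpr ⟨ne_of_gt hv2, Finset.mem_erase.mpr ⟨?_, hv1⟩⟩
        exact ne_of_gt (lt_trans hmm' hv2)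
      have hcard2 : (((Finset.univ.image f).erase m).erase m').card =
          (Finset.univ.image f).card - 2 := by
        rw [Finset.card_erase_of_mem, Finset.card_erase_of_mem hmmem]
        · omega
        · exact Finset.mem_erase.mpr ⟨ne_of_gt hmm', hm'mem⟩
      calc (Finset.univ.image g).card ≤ _ := Finset.card_le_card hsub
        _ ≤ (((Finset.univ.image f).filter (fun v => m' < v)).image (fun v => v - δ)).card + 1 :=
            Finset.card_insert_le _ _
        _ ≤ ((Finset.univ.image f).filter (fun v => m' < v)).card + 1 :=
            Nat.add_le_add_right (Finset.card_image_le) 1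
        _ ≤ ((Finset.univ.image f).card - 2) + 1 := by
            rw [← hcard2]; exact Nat.add_le_add_right (Finset.card_le_card hfilt) 1
        _ ≤ n := by omega
    have hdecomp : ∀ w : S, ∑ z, M w z * f z = (∑ z, M w z * g z) + δ * ∑ z ∈ U, M w z := by
      intro w
      have : ∀ z, M w z * f z = M w z * g z + δ * (M w z * (if z ∈ U then 1 else 0)) := by
        intro z; rw [hfg z]; ring
      rw [Finset.sum_congr rfl (fun z _ => this z), Finset.sum_add_distrib, ← Finset.mul_sum,
        indicator_mem_sum]
    rw [hdecomp x, hdecomp y]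
    have h1 := ih M hrow hM g hgcard hgmono x y hxy
    have h2 := hM x y hxy U hUup
    nlinarith
  
lemma smmat_apply_mono {M : Matrix S S ℝ} (hrow : ∀ x, ∑ z, M x z = 1)
    (hSM : SMmat M) {f : S → ℝ} (hf : Monotone f) {x y : S} (hxy : x ≤ y) :
    ∑ z, M x z * f z ≤ ∑ z, M y z * f z :=
  smmat_apply_mono_aux (Finset.univ.image f).card M hrow hSM f le_rfl hf x y hxy

end AuxMono
section AuxPow

set_option linter.unusedSectionVars false

variable {S : Type} [PartialOrder S] [Fintype S] [DecidableEq S]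

lemma rowsum_mul {M N : Matrix S S ℝ} (hM : ∀ x, ∑ z, M x z = 1)
    (hN : ∀ x, ∑ z, N x z = 1) : ∀ x, ∑ z, (M * N) x z = 1 := by
  intro x
  simp only [Matrix.mul_apply]
  rw [Finset.sum_comm]
  simp only [← Finset.mul_sum]
  rw [Finset.sum_congr rfl (fun w _ => by rw [hN w])]
  simpa using hM x

lemma smmat_one : SMmat (1 : Matrix S S ℝ) := by
  intro x y hxy U hUup
  have hid : ∀ w : S, ∑ z ∈ U, (1 : Matrix S S ℝ) w z = if w ∈ U then 1 else 0 := by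
    intro w
    simp only [Matrix.one_apply]
    exact Finset.sum_ite_eq U w (fun _ => (1:ℝ))
  rw [hid x, hid y]
  by_cases hx : x ∈ U
  · rw [if_pos hx, if_pos (Finset.mem_coe.mp (hUup hxy hx))]
  · rw [if_neg hx]
    split <;> norm_num

lemma smmat_mul {M N : Matrix S S ℝ} (hMr : ∀ x, ∑ z, M x z = 1)
    (hM : SMmat M) (hN : SMmat N) : SMmat (M * N) := by
  intro x y hxy U hUup
  have hrw : ∀ w : S, ∑ z ∈ U, (M * N) w z = ∑ v, M w v * (∑ z ∈ U, N v z) := by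
    intro w
    simp only [Matrix.mul_apply]
    rw [Finset.sum_comm]
    simp only [Finset.mul_sum]
  rw [hrw x, hrw y]
  exact smmat_apply_mono hMr hM (fun a b hab => hN a b hab U hUup) hxy

lemma smmat_pow {M : Matrix S S ℝ} (hMr : ∀ x, ∑ z, M x z = 1) (hM : SMmat M) :
    ∀ n : ℕ, SMmat (M ^ n) ∧ (∀ x, ∑ z, (M ^ n) x z = 1) := by
  intro n
  induction n with
  | zero => exact ⟨by rw [pow_zero]; exact smmat_one, by rw [pow_zero]; intro x; simp [Matrix.one_apply]⟩
  | succ n ih =>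
    rw [pow_succ]
    exact ⟨smmat_mul ih.2 ih.1 hM, rowsum_mul ih.2 hMr⟩

end AuxPow
section AuxExp

set_option linter.unusedSectionVars false
set_option maxHeartbeats 1000000

open NormedSpace
open scoped Nat

variable {S : Type} [PartialOrder S] [Fintype S] [DecidableEq S]

lemma exp_entry_hasSum (A : Matrix S S ℝ) (x : S) (T : Finset S) :
    HasSum (fun n : ℕ => ((n ! : ℝ))⁻¹ * ∑ z ∈ T, (A ^ n) x z)
      (∑ z ∈ T, NormedSpace.exp A x z) := by
  letI : SeminormedRing (Matrix S S ℝ) := Matrix.linftyOpSemiNormedRing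
  letI : NormedRing (Matrix S S ℝ) := Matrix.linftyOpNormedRing
  letI : NormedAlgebra ℝ (Matrix S S ℝ) := Matrix.linftyOpNormedAlgebra
  have hsum : Summable (fun n : ℕ => ((n ! : ℝ))⁻¹ • A ^ n) := expSeries_summable' (𝕂 := ℝ) A
  let E : Matrix S S ℝ →ₗ[ℝ] ℝ :=
    { toFun := fun B => ∑ z ∈ T, B x z
      map_add' := by intro B C; simp [Matrix.add_apply, Finset.sum_add_distrib]
      map_smul' := by intro c B; simp [Matrix.smul_apply, Finset.mul_sum] }
  let E' : Matrix S S ℝ →L[ℝ] ℝ := { E with cont := E.continuous_of_finiteDimensional }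
  have h1 : HasSum (fun n : ℕ => ((n ! : ℝ))⁻¹ • A ^ n) (NormedSpace.exp A) := by
    rw [exp_eq_tsum ℝ]
    exact hsum.hasSum
  have h2 := h1.mapL E'
  have h3 : ∀ n : ℕ, E' (((n ! : ℝ))⁻¹ • A ^ n) = ((n ! : ℝ))⁻¹ * ∑ z ∈ T, (A ^ n) x z := by
    intro n
    show E (((n ! : ℝ))⁻¹ • A ^ n) = _
    simp [E, Matrix.smul_apply, Finset.mul_sum]
  have h4 : E' (NormedSpace.exp A) = ∑ z ∈ T, NormedSpace.exp A x z := rfl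
  rw [← h4]
  exact h2.congr_fun (fun n => (h3 n).symm)

lemma matrix_exp_smul_one (c : ℝ) :
    NormedSpace.exp (c • (1 : Matrix S S ℝ)) = Real.exp c • (1 : Matrix S S ℝ) := by
  letI : SeminormedRing (Matrix S S ℝ) := Matrix.linftyOpSemiNormedRing
  letI : NormedRing (Matrix S S ℝ) := Matrix.linftyOpNormedRing
  letI : NormedAlgebra ℝ (Matrix S S ℝ) := Matrix.linftyOpNormedAlgebra
  have h1 : c • (1 : Matrix S S ℝ) = algebraMap ℝ (Matrix S S ℝ) c :=
    (Algebra.algebraMap_eq_smul_one c).symm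
  rw [h1]
  exact (NormedSpace.algebraMap_exp_comm (𝔸 := Matrix S S ℝ) c).symm.trans
    (by rw [← Real.exp_eq_exp_ℝ, Algebra.algebraMap_eq_smul_one])

lemma exp_sub_one_factor (M : Matrix S S ℝ) (t : ℝ) :
    NormedSpace.exp (t • (M - 1)) = Real.exp (-t) • NormedSpace.exp (t • M) := by
  have hsplit : t • (M - 1) = t • M + (-t) • (1 : Matrix S S ℝ) := by
    rw [smul_sub]; module
  have hcomm : Commute (t • M) ((-t) • (1 : Matrix S S ℝ)) :=
    ((Commute.one_right M).smul_left t).smul_right (-t)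
  rw [hsplit]
  exact (Matrix.exp_add_of_commute _ _ hcomm).trans
    (by rw [matrix_exp_smul_one, Matrix.mul_smul, mul_one])

end AuxExp
section AuxSemi

set_option linter.unusedSectionVars false
set_option maxHeartbeats 1000000

open scoped Nat

variable {S : Type} [PartialOrder S] [Fintype S] [DecidableEq S]

lemma semigroup_of_SM {M : Matrix S S ℝ} (hrow : ∀ x, ∑ z, M x z = 1) (hM : SMmat M) :
    SemigroupStochMono (M - 1) := by
  intro t ht x y hxy U hUup
  have hPt : ∀ w : S, ∑ z ∈ U, transP (M - 1) t w z
      = Real.exp (-t) * ∑ z ∈ U, NormedSpace.exp (t • M) w z := by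
    intro w
    simp only [transP, exp_sub_one_factor, Matrix.smul_apply, smul_eq_mul, ← Finset.mul_sum]
  rw [hPt x, hPt y]
  have hterm : ∀ (w : S) (n : ℕ), ∑ z ∈ U, ((t • M) ^ n) w z = t ^ n * ∑ z ∈ U, (M ^ n) w z := by
    intro w n
    rw [smul_pow]
    simp only [Matrix.smul_apply, smul_eq_mul, Finset.mul_sum]
  have hx := exp_entry_hasSum (t • M) x U
  have hy := exp_entry_hasSum (t • M) y U
  have hle : ∑ z ∈ U, NormedSpace.exp (t • M) x z ≤ ∑ z ∈ U, NormedSpace.exp (t • M) y z := by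
    refine hasSum_le (fun n => ?_) hx hy
    rw [hterm x n, hterm y n]
    have h1 : ∑ z ∈ U, (M ^ n) x z ≤ ∑ z ∈ U, (M ^ n) y z :=
      (smmat_pow hrow hM n).1 x y hxy U hUup
    have h2 : (0:ℝ) ≤ (n ! : ℝ)⁻¹ := by positivity
    have h3 : (0:ℝ) ≤ t ^ n := pow_nonneg ht n
    rw [← mul_assoc, ← mul_assoc]
    exact mul_le_mul_of_nonneg_left h1 (by positivity)
  exact mul_le_mul_of_nonneg_left hle (le_of_lt (Real.exp_pos (-t)))

lemma pow_rowsum_zero {A : Matrix S S ℝ} (h0 : ∀ x, ∑ z, A x z = 0) (n : ℕ) (x : S) :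
    ∑ z, (A ^ (n + 1)) x z = 0 := by
  rw [pow_succ]
  simp only [Matrix.mul_apply]
  rw [Finset.sum_comm]
  simp only [← Finset.mul_sum]
  rw [Finset.sum_congr rfl (fun w _ => by rw [h0 w, mul_zero])]
  simp

lemma exp_rowsum_one {L : Matrix S S ℝ} (h0 : ∀ x, ∑ z, L x z = 0) (t : ℝ) (x : S) :
    ∑ z, transP L t x z = 1 := by
  have hs : ∀ z, (t • L) x z = t * L x z := fun z => rfl
  have h0' : ∀ x, ∑ z, (t • L) x z = 0 := by
    intro w
    simp only [Matrix.smul_apply, smul_eq_mul, ← Finset.mul_sum, h0 w, mul_zero]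
  have h := exp_entry_hasSum (t • L) x Finset.univ
  have hterm : ∀ n : ℕ, ((n ! : ℝ))⁻¹ * ∑ z, ((t • L) ^ n) x z = if n = 0 then 1 else 0 := by
    intro n
    cases n with
    | zero => simp [Matrix.one_apply]
    | succ n => rw [pow_rowsum_zero h0' n x]; simp
  have h2 : HasSum (fun n : ℕ => if n = 0 then (1:ℝ) else 0) (∑ z, transP L t x z) :=
    h.congr_fun (fun n => (hterm n).symm)
  exact (HasSum.unique h2 (hasSum_ite_eq 0 1)).symm ▸ rfl

end AuxSemi
section AuxNonneg

set_option linter.unusedSectionVars false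
set_option maxHeartbeats 1000000

open scoped Nat

variable {S : Type} [PartialOrder S] [Fintype S] [DecidableEq S]

lemma pow_entry_nonneg {A : Matrix S S ℝ} (hA : ∀ x z, 0 ≤ A x z) (n : ℕ) :
    ∀ x z, 0 ≤ (A ^ n) x z := by
  induction n with
  | zero => intro x z; rw [pow_zero]; by_cases h : x = z <;> simp [Matrix.one_apply, h]
  | succ n ih =>
    intro x z
    rw [pow_succ, Matrix.mul_apply]
    exact Finset.sum_nonneg (fun w _ => mul_nonneg (ih x w) (hA w z))

lemma exp_entry_nonneg_of_nonneg {A : Matrix S S ℝ} (hA : ∀ x z, 0 ≤ A x z) (x z : S) :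
    0 ≤ NormedSpace.exp A x z := by
  have h := exp_entry_hasSum A x {z}
  simp only [Finset.sum_singleton] at h
  refine hasSum_le (fun n => ?_) (hasSum_zero) h
  have := pow_entry_nonneg hA n x z
  positivity

lemma transP_nonneg {L : Matrix S S ℝ} (hL : IsGenerator L) {t : ℝ} (ht : 0 ≤ t) (x z : S) :
    0 ≤ transP L t x z := by
  set c : ℝ := ∑ w, |t * L w w| with hc
  have hcn : 0 ≤ c := Finset.sum_nonneg (fun w _ => abs_nonneg _)
  set N : Matrix S S ℝ := t • L + c • 1 with hN
  have hNn : ∀ a b, 0 ≤ N a b := by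
    intro a b
    by_cases hab : a = b
    · subst hab
      simp only [hN, Matrix.add_apply, Matrix.smul_apply, Matrix.one_apply_eq, smul_eq_mul,
        mul_one]
      have h1 : |t * L a a| ≤ c := Finset.single_le_sum (fun w _ => abs_nonneg (t * L w w))
        (Finset.mem_univ a)
      have := neg_abs_le (t * L a a)
      linarith
    · simp only [hN, Matrix.add_apply, Matrix.smul_apply, Matrix.one_apply_ne hab, smul_eq_mul,
        mul_zero, add_zero]
      exact mul_nonneg ht (hL.1 a b hab)
  have hsplit : t • L = (-c) • (1 : Matrix S S ℝ) + N := by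
    rw [hN]; module
  have hcomm : Commute ((-c) • (1 : Matrix S S ℝ)) N :=
    ((Commute.one_left N).smul_left (-c))
  have : transP L t = Real.exp (-c) • NormedSpace.exp N := by
    rw [transP, hsplit]
    exact (Matrix.exp_add_of_commute _ _ hcomm).trans
      (by rw [matrix_exp_smul_one, Matrix.smul_mul, one_mul])
  rw [this, Matrix.smul_apply, smul_eq_mul]
  exact mul_nonneg (le_of_lt (Real.exp_pos _)) (exp_entry_nonneg_of_nonneg hNn x z)

lemma tendsto_transP_div (L : Matrix S S ℝ) (x z : S) (hxz : x ≠ z) :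
    Filter.Tendsto (fun n : ℕ => transP L ((n:ℝ)+1)⁻¹ x z / ((n:ℝ)+1)⁻¹)
      Filter.atTop (nhds (L x z)) := by
  letI : SeminormedRing (Matrix S S ℝ) := Matrix.linftyOpSemiNormedRing
  letI : NormedRing (Matrix S S ℝ) := Matrix.linftyOpNormedRing
  letI : NormedAlgebra ℝ (Matrix S S ℝ) := Matrix.linftyOpNormedAlgebra
  have hD : HasDerivAt (fun u : ℝ => NormedSpace.exp (u • L)) L 0 := by
    have := hasDerivAt_exp_smul_const' (𝕂 := ℝ) L 0
    simp only [zero_smul, NormedSpace.exp_zero, mul_one] at this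
    exact this
  -- entry evaluation
  let E : Matrix S S ℝ →ₗ[ℝ] ℝ :=
    { toFun := fun B => B x z
      map_add' := by intro B C; rfl
      map_smul' := by intro c B; rfl }
  let E' : Matrix S S ℝ →L[ℝ] ℝ := { E with cont := E.continuous_of_finiteDimensional }
  have hD2 : HasDerivAt (fun u : ℝ => NormedSpace.exp (u • L) x z) (L x z) 0 :=
    E'.hasFDerivAt.comp_hasDerivAt 0 hD
  have hslope := (hasDerivAt_iff_tendsto_slope).mp hD2
  have hexp0 : NormedSpace.exp ((0:ℝ) • L) x z = 0 := by
    rw [zero_smul, NormedSpace.exp_zero, Matrix.one_apply_ne hxz]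
  have hseq : Filter.Tendsto (fun n : ℕ => (((n:ℝ)+1)⁻¹ : ℝ)) Filter.atTop
      (nhdsWithin 0 {(0:ℝ)}ᶜ) := by
    refine tendsto_nhdsWithin_of_tendsto_nhds_of_eventually_within _ ?_ ?_
    · exact tendsto_one_div_add_atTop_nhds_zero_nat.congr (fun n => by rw [one_div])
    · refine Filter.Eventually.of_forall (fun n => ?_)
      simp only [Set.mem_compl_iff, Set.mem_singleton_iff]
      positivity
  have := hslope.comp hseq
  refine this.congr (fun n => ?_)
  simp only [Function.comp_apply, slope_def_field, transP]
  rw [hexp0]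
  simp [div_eq_mul_inv, mul_comm]

end AuxNonneg
/-- Monotonicity equivalence for continuous-time Markov
processes on `S` holds iff weak monotonicity equivalence holds for
discrete-time Markov chains on `S`. -/
theorem ctsTime_monotonicity_equiv_iff_weak_monotonicity_equiv
    (S : Type) [PartialOrder S] [Fintype S] [DecidableEq S]
    (hconn : PosetConnected S) :
    (∀ L : Matrix S S ℝ, IsGenerator L → SemigroupStochMono L → MonotoneRep L)
      ↔ (∀ P : S → S → ℝ, IsMeasureSystem P 1 →
          (∃ θ : ℝ, 0 < θ ∧ θ ≤ 1 ∧
            StochMonoSystem (fun x z => θ * P x z + (1 - θ) * pointMass x z)) →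
          (∃ θ : ℝ, 0 < θ ∧ θ ≤ 1 ∧
            RealizablyMono (fun x z => θ * P x z + (1 - θ) * pointMass x z))) := by
  classical
  constructor
  · -- forward: continuous-time implies discrete-time weak
    rintro hA P hMS ⟨θ, hθ0, hθ1, hSM⟩
    set M : Matrix S S ℝ := Matrix.of (fun x z => θ * P x z + (1 - θ) * pointMass x z) with hMdef
    have hMapp : ∀ x z, M x z = θ * P x z + (1 - θ) * pointMass x z := fun x z => rfl
    have hpm : ∀ x : S, ∑ z, pointMass x z = 1 := by
      intro x
      simp only [pointMass]
      rw [Finset.sum_ite_eq' Finset.univ x (fun _ => (1:ℝ))]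
      simp
    have hrow : ∀ x, ∑ z, M x z = 1 := by
      intro x
      simp only [hMapp, Finset.sum_add_distrib, ← Finset.mul_sum, hpm, hMS.2 x]
      ring
    have hSMM : SMmat M := hSM
    have hgen : IsGenerator (M - 1) := by
      constructor
      · intro x y hxy
        rw [Matrix.sub_apply, Matrix.one_apply_ne hxy, hMapp]
        have : pointMass x y = 0 := by
          simp [pointMass, Ne.symm hxy]
        rw [this]
        have := hMS.1 x y
        nlinarith
      · intro x
        simp only [Matrix.sub_apply, Finset.sum_sub_distrib, hrow x]
        rw [Finset.sum_congr rfl (fun z _ => Matrix.one_apply (i := x) (j := z))]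
        rw [Finset.sum_ite_eq Finset.univ x (fun _ => (1:ℝ))]
        simp
    obtain ⟨γ, hγ0, hγm, hγrep⟩ := hA (M - 1) hgen (semigroup_of_SM hrow hSMM)
    set C : ℝ := ∑ h : S → S, γ h with hC
    have hC0 : 0 ≤ C := Finset.sum_nonneg (fun h _ => hγ0 h)
    set ε : ℝ := 1 / (1 + C) with hε
    have hε0 : 0 < ε := by positivity
    have hε1 : ε ≤ 1 := by rw [hε]; rw [div_le_one (by linarith)]; linarith
    have hεC : ε * C ≤ 1 := by
      rw [hε]
      rw [div_mul_eq_mul_div, div_le_one (by linarith)]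
      linarith
    refine ⟨ε * θ, by positivity, le_trans (mul_le_mul hε1 hθ1 (le_of_lt hθ0) zero_le_one) (by norm_num), ?_⟩
    set μ : (S → S) → ℝ := fun h => ε * γ h + if h = id then 1 - ε * C else 0 with hμ
    refine ⟨μ, ?_, ?_, ?_⟩
    · intro h
      by_cases hid : h = id
      · simp only [hμ, if_pos hid]
        have := hγ0 h
        nlinarith
      · simp only [hμ, if_neg hid]
        have := hγ0 h
        nlinarith
    · intro h hne
      by_cases hid : h = id
      · rw [hid]; exact monotone_id
      · have : γ h ≠ 0 := by
          intro h0
          apply hne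
          simp only [hμ, if_neg hid, h0]
          ring
        exact (hγm h this).1
    · intro x z
      have hidmem : (id : S → S) ∈ Finset.univ.filter (fun h : S → S => h x = z) ↔ x = z := by
        simp
      have hsplit : ∑ h ∈ Finset.univ.filter (fun h : S → S => h x = z), μ h
          = ε * (∑ h ∈ Finset.univ.filter (fun h : S → S => h x = z), γ h)
            + (if x = z then 1 - ε * C else 0) := by
        simp only [hμ]
        simp only [Finset.sum_add_distrib, ← Finset.mul_sum]
        congr 1
        rw [Finset.sum_ite_eq' (Finset.univ.filter (fun h : S → S => h x = z)) id
          (fun _ => 1 - ε * C)]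
        simp only [Finset.mem_filter, Finset.mem_univ, true_and, id_eq]
      by_cases hxz : x = z
      · subst hxz
        have hfib : ∑ h ∈ Finset.univ.filter (fun h : S → S => h x = x), γ h
            = C + θ * P x x - θ := by
          have hdecomp : ∑ z : S, ∑ h ∈ Finset.univ.filter (fun h : S → S => h x = z), γ h = C :=
            Finset.sum_fiberwise Finset.univ (fun h : S → S => h x) γ
          have hoff : ∀ z : S, z ≠ x →
              ∑ h ∈ Finset.univ.filter (fun h : S → S => h x = z), γ h = θ * P x z := by
            intro z hzx
            rw [← hγrep x z (Ne.symm hzx), Matrix.sub_apply, Matrix.one_apply_ne (Ne.symm hzx),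
              hMapp]
            have : pointMass x z = 0 := by simp [pointMass, hzx]
            rw [this]; ring
          have hsum := hdecomp
          rw [← Finset.add_sum_erase _ _ (Finset.mem_univ x)] at hsum
          have herase : ∑ z ∈ Finset.univ.erase x,
              ∑ h ∈ Finset.univ.filter (fun h : S → S => h x = z), γ h
              = ∑ z ∈ Finset.univ.erase x, θ * P x z := by
            refine Finset.sum_congr rfl (fun z hz => ?_)
            exact hoff z (Finset.mem_erase.mp hz).1
          rw [herase] at hsum
          have hPx : ∑ z ∈ Finset.univ.erase x, θ * P x z = θ * (1 - P x x) := by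
            rw [← Finset.mul_sum]
            rw [Finset.sum_erase_eq_sub (Finset.mem_univ x), hMS.2 x]
          rw [hPx] at hsum
          linarith
        rw [hsplit, if_pos rfl, hfib]
        have hp1 : pointMass x x = 1 := by simp [pointMass]
        simp only [hp1]
        ring
      · have hfib : ∑ h ∈ Finset.univ.filter (fun h : S → S => h x = z), γ h = θ * P x z := by
          rw [← hγrep x z hxz, Matrix.sub_apply, Matrix.one_apply_ne hxz, hMapp]
          have : pointMass x z = 0 := by simp [pointMass, Ne.symm hxz]
          rw [this]; ring
        rw [hsplit, if_neg hxz, hfib]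
        have hp0 : pointMass x z = 0 := by simp [pointMass, Ne.symm hxz]
        simp only [hp0]
        ring
  · -- reverse: discrete-time weak implies continuous-time
    intro hB L hgen hsemi
    set t : ℕ → ℝ := fun n => ((n:ℝ)+1)⁻¹ with ht
    have ht0 : ∀ n, 0 < t n := by intro n; simp only [ht]; positivity
    have hsys : ∀ n : ℕ, ∃ θ : ℝ, 0 < θ ∧ θ ≤ 1 ∧
        RealizablyMono (fun x z => θ * transP L (t n) x z + (1 - θ) * pointMass x z) := by
      intro n
      refine hB (fun x z => transP L (t n) x z)
        ⟨fun x z => transP_nonneg hgen (ht0 n).le x z,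
         fun x => exp_rowsum_one hgen.2 (t n) x⟩ ⟨1, one_pos, le_rfl, ?_⟩
      have heq : (fun x z => 1 * transP L (t n) x z + (1 - 1) * pointMass x z)
          = fun x z => transP L (t n) x z := by
        funext x z; ring
      rw [heq]
      intro x y hxy
      exact hsemi (t n) (ht0 n).le x y hxy
    choose θn hθ0 hθ1 hreal using hsys
    have hreal' : ∀ n : ℕ, ∃ μ : (S → S) → ℝ, (∀ h, 0 ≤ μ h) ∧ (∀ h, μ h ≠ 0 → Monotone h) ∧
        ∀ (α : S) (x : S), ∑ h ∈ Finset.univ.filter (fun h : S → S => h α = x), μ h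
          = θn n * transP L (t n) α x + (1 - θn n) * pointMass α x := fun n => hreal n
    choose μn hμ0 hμm hμmarg using hreal'
    set g : ℕ → (S → S) → ℝ :=
      fun n h => if h = id then 0 else μn n h / (θn n * t n) with hg
    have hg0 : ∀ n h, 0 ≤ g n h := by
      intro n h
      by_cases hid : h = id
      · simp only [hg, if_pos hid]
        exact le_rfl
      · simp only [hg, if_neg hid]
        exact div_nonneg (hμ0 n h) (mul_nonneg (hθ0 n).le (ht0 n).le)
    have hmarg : ∀ (n : ℕ) (x z : S), x ≠ z →
        ∑ h ∈ Finset.univ.filter (fun h : S → S => h x = z), g n h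
          = transP L (t n) x z / t n := by
      intro n x z hxz
      have h1 : ∀ h ∈ Finset.univ.filter (fun h : S → S => h x = z),
          g n h = μn n h / (θn n * t n) := by
        intro h hh
        have : h ≠ id := by
          intro hid
          apply hxz
          have := (Finset.mem_filter.mp hh).2
          rw [hid] at this
          exact this
        simp only [hg, if_neg this]
      rw [Finset.sum_congr rfl h1, ← Finset.sum_div, hμmarg n x z]
      have hpm : pointMass x z = 0 := by simp [pointMass, Ne.symm hxz]
      rw [hpm, mul_zero, add_zero]
      exact mul_div_mul_left _ _ (ne_of_gt (hθ0 n))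
    -- uniform bound
    have hbdd : ∀ x z : S, x ≠ z → ∃ b : ℝ, ∀ n, transP L (t n) x z / t n ≤ b := by
      intro x z hxz
      obtain ⟨b, hb⟩ := (tendsto_transP_div L x z hxz).bddAbove_range
      exact ⟨b, fun n => hb (Set.mem_range_self n)⟩
    have hbdd' : ∀ x z : S, ∃ b : ℝ, 0 ≤ b ∧ (x ≠ z → ∀ n, transP L (t n) x z / t n ≤ b) := by
      intro x z
      by_cases hxz : x = z
      · exact ⟨0, le_rfl, fun h => absurd hxz h⟩
      · obtain ⟨b, hb⟩ := hbdd x z hxz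
        refine ⟨max b 0, le_max_right _ _, fun _ n => le_trans (hb n) (le_max_left _ _)⟩
    choose b hb0 hble using hbdd'
    set B : ℝ := ∑ p : S × S, b p.1 p.2 with hBdef
    have hB0 : 0 ≤ B := Finset.sum_nonneg (fun p _ => hb0 p.1 p.2)
    have hBle : ∀ x z : S, b x z ≤ B := by
      intro x z
      exact Finset.single_le_sum (f := fun p : S × S => b p.1 p.2)
        (fun p _ => hb0 p.1 p.2) (Finset.mem_univ (x, z))
    have heB : ∀ (n : ℕ) (x z : S), x ≠ z → transP L (t n) x z / t n ≤ B := by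
      intro n x z hxz
      exact le_trans (hble x z hxz n) (hBle x z)
    have hgB : ∀ n h, g n h ≤ B := by
      intro n h
      by_cases hid : h = id
      · simp only [hg, if_pos hid]; exact hB0
      · obtain ⟨x, hx⟩ := Function.ne_iff.mp hid
        have hxne : x ≠ h x := fun hcon => hx (by simp [← hcon])
        calc g n h ≤ ∑ h' ∈ Finset.univ.filter (fun h' : S → S => h' x = h x), g n h' := by
              refine Finset.single_le_sum (fun h' _ => hg0 n h') ?_
              simp
          _ = transP L (t n) x (h x) / t n := hmarg n x (h x) hxne
          _ ≤ B := heB n x (h x) hxne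
    -- compactness
    have hcomp : IsCompact (Set.Icc (fun _ => (0:ℝ)) (fun _ => B) : Set ((S → S) → ℝ)) :=
      isCompact_Icc
    have hgmem : ∀ n, g n ∈ Set.Icc (fun _ => (0:ℝ)) (fun _ => B) := by
      intro n
      constructor
      · intro h; exact hg0 n h
      · intro h; exact hgB n h
    obtain ⟨γ, hγmem, φ, hφ, hφtend⟩ := hcomp.tendsto_subseq hgmem
    have hcoord : ∀ h : S → S, Filter.Tendsto (fun n => g (φ n) h) Filter.atTop (nhds (γ h)) :=
      fun h => tendsto_pi_nhds.mp hφtend h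
    refine ⟨γ, ?_, ?_, ?_⟩
    · intro h; exact hγmem.1 h
    · intro h hne
      constructor
      · by_contra hmono
        apply hne
        have hzero : ∀ n, g (φ n) h = 0 := by
          intro n
          by_cases hid : h = id
          · simp only [hg, if_pos hid]
          · simp only [hg, if_neg hid]
            have : μn (φ n) h = 0 := by
              by_contra hμ
              exact hmono (hμm (φ n) h hμ)
            rw [this, zero_div]
        have h1 : Filter.Tendsto (fun n => g (φ n) h) Filter.atTop (nhds 0) := by
          rw [Filter.tendsto_congr hzero]
          exact tendsto_const_nhds
        exact tendsto_nhds_unique (hcoord h) h1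
      · intro hid
        apply hne
        have hzero : ∀ n, g (φ n) h = 0 := fun n => by simp only [hg, if_pos hid]
        have h1 : Filter.Tendsto (fun n => g (φ n) h) Filter.atTop (nhds 0) := by
          rw [Filter.tendsto_congr hzero]
          exact tendsto_const_nhds
        exact tendsto_nhds_unique (hcoord h) h1
    · intro x z hxz
      have h1 : Filter.Tendsto
          (fun n => ∑ h ∈ Finset.univ.filter (fun h : S → S => h x = z), g (φ n) h)
          Filter.atTop
          (nhds (∑ h ∈ Finset.univ.filter (fun h : S → S => h x = z), γ h)) :=
        tendsto_finset_sum _ (fun h _ => hcoord h)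
      have h2 : Filter.Tendsto
          (fun n => ∑ h ∈ Finset.univ.filter (fun h : S → S => h x = z), g (φ n) h)
          Filter.atTop (nhds (L x z)) := by
        have h3 : Filter.Tendsto (fun n => transP L (t (φ n)) x z / t (φ n))
            Filter.atTop (nhds (L x z)) :=
          (tendsto_transP_div L x z hxz).comp hφ.tendsto_atTop
        exact h3.congr (fun n => (hmarg (φ n) x z hxz).symm)
      exact tendsto_nhds_unique h2 h1
end
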